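/- arXiv:2305.02256 — 2 statements merged into one kernel-verified Lean document; each statement's English description precedes it below -/
import Mathlib

section
/- For any sequences (μ_m, ν_m) in the probability simplex S^n converging in the Euclidean metric to (μ, ν) ∈ S^n × S^n, the Hilbert projective distance is lower semicontinuous: liminf_{m→∞} H(μ_m, ν_m) ≥ H(μ, ν). -/
open Filter Finset Topology

noncomputable section

/-- The probability simplex in ℝ^{n+1}. -/
def probSimplex (n : ℕ) : Set (EuclideanSpace ℝ (Fin (n+1))) :=
  {x | (∑ i, x i) = 1 ∧ ∀ i, 0 ≤ x i}

/-- The interior of the probability simplex: all coordinates strictly positive. -/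
def intSimplex (n : ℕ) : Set (EuclideanSpace ℝ (Fin (n+1))) :=
  {x | (∑ i, x i) = 1 ∧ ∀ i, 0 < x i}

/-- max over indices j with ν j > 0 of μ j / ν j. -/
def maxRatio {n : ℕ} (μ ν : EuclideanSpace ℝ (Fin (n+1))) : ℝ :=
  sSup {r | ∃ j, 0 < ν j ∧ r = μ j / ν j}

/-- min over indices j with ν j > 0 of μ j / ν j. -/
def minRatio {n : ℕ} (μ ν : EuclideanSpace ℝ (Fin (n+1))) : ℝ :=
  sInf {r | ∃ j, 0 < ν j ∧ r = μ j / ν j}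

/-- Hilbert projective distance on the simplex, ∞ if supports differ. -/
def hilbertDist {n : ℕ} (μ ν : EuclideanSpace ℝ (Fin (n+1))) : EReal :=
  if ∀ i, (0 < μ i ↔ 0 < ν i) then
    ((Real.log (maxRatio μ ν / minRatio μ ν) : ℝ) : EReal)
  else ⊤

private lemma exists_pos_coord {n : ℕ} {x : EuclideanSpace ℝ (Fin (n+1))}
    (hx : x ∈ probSimplex n) : ∃ j, 0 < x j := by
  by_contra h
  push_neg at h
  have h0 : ∑ i, x i = 0 := Finset.sum_eq_zero fun i _ => le_antisymm (h i) (hx.2 i)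
  rw [hx.1] at h0; norm_num at h0

private lemma coord_le_one {n : ℕ} {x : EuclideanSpace ℝ (Fin (n+1))}
    (hx : x ∈ probSimplex n) (i : Fin (n+1)) : x i ≤ 1 := by
  rw [← hx.1]
  exact Finset.single_le_sum (fun j _ => hx.2 j) (Finset.mem_univ i)

private lemma ratioSet_finite {n : ℕ} (μ ν : EuclideanSpace ℝ (Fin (n+1))) :
    {r | ∃ j, 0 < ν j ∧ r = μ j / ν j}.Finite :=
  (Set.finite_range fun j => μ j / ν j).subset (by rintro r ⟨j, -, rfl⟩; exact ⟨j, rfl⟩)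

private lemma maxRatio_mem {n : ℕ} (μ ν : EuclideanSpace ℝ (Fin (n+1)))
    (h : ∃ j, 0 < ν j) : ∃ j, 0 < ν j ∧ maxRatio μ ν = μ j / ν j := by
  obtain ⟨j, hj⟩ := h
  have hne : Set.Nonempty {r | ∃ k, 0 < ν k ∧ r = μ k / ν k} := ⟨μ j / ν j, j, hj, rfl⟩
  exact hne.csSup_mem (ratioSet_finite μ ν)

private lemma minRatio_mem {n : ℕ} (μ ν : EuclideanSpace ℝ (Fin (n+1)))
    (h : ∃ j, 0 < ν j) : ∃ j, 0 < ν j ∧ minRatio μ ν = μ j / ν j := by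
  obtain ⟨j, hj⟩ := h
  have hne : Set.Nonempty {r | ∃ k, 0 < ν k ∧ r = μ k / ν k} := ⟨μ j / ν j, j, hj, rfl⟩
  exact hne.csInf_mem (ratioSet_finite μ ν)

private lemma le_maxRatio {n : ℕ} {μ ν : EuclideanSpace ℝ (Fin (n+1))} {j : Fin (n+1)}
    (hj : 0 < ν j) : μ j / ν j ≤ maxRatio μ ν :=
  le_csSup (ratioSet_finite μ ν).bddAbove ⟨j, hj, rfl⟩

private lemma minRatio_le {n : ℕ} {μ ν : EuclideanSpace ℝ (Fin (n+1))} {j : Fin (n+1)}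
    (hj : 0 < ν j) : minRatio μ ν ≤ μ j / ν j :=
  csInf_le (ratioSet_finite μ ν).bddBelow ⟨j, hj, rfl⟩

private lemma minRatio_pos {n : ℕ} {μ ν : EuclideanSpace ℝ (Fin (n+1))}
    (hab : ∀ i, (0 < μ i ↔ 0 < ν i)) (h : ∃ j, 0 < ν j) : 0 < minRatio μ ν := by
  obtain ⟨k, hk, hkeq⟩ := minRatio_mem μ ν h
  rw [hkeq]
  exact div_pos ((hab k).2 hk) hk

private lemma tendsto_coord {n : ℕ} {xs : ℕ → EuclideanSpace ℝ (Fin (n+1))}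
    {x : EuclideanSpace ℝ (Fin (n+1))} (h : Tendsto xs atTop (𝓝 x)) (i : Fin (n+1)) :
    Tendsto (fun m => xs m i) atTop (𝓝 (x i)) :=
  ((EuclideanSpace.proj i).continuous.tendsto x).comp h

theorem hilbert_liminf {n : ℕ} (μ ν : EuclideanSpace ℝ (Fin (n+1)))
    (μs νs : ℕ → EuclideanSpace ℝ (Fin (n+1)))
    (hμ : μ ∈ probSimplex n) (hν : ν ∈ probSimplex n)
    (hμs : ∀ m, μs m ∈ probSimplex n) (hνs : ∀ m, νs m ∈ probSimplex n)
    (hconvμ : Tendsto μs atTop (𝓝 μ)) (hconvν : Tendsto νs atTop (𝓝 ν)) :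
    hilbertDist μ ν ≤ liminf (fun m => hilbertDist (μs m) (νs m)) atTop := by
  have key : ∀ c : ℝ, (c : EReal) < hilbertDist μ ν →
      ∀ᶠ m in atTop, (c : EReal) < hilbertDist (μs m) (νs m) := by
    intro c hc
    by_cases hsupp : ∀ i, (0 < μ i ↔ 0 < ν i)
    · -- supports of the limit agree
      rw [hilbertDist, if_pos hsupp] at hc
      have hc' : c < Real.log (maxRatio μ ν / minRatio μ ν) := by exact_mod_cast hc
      obtain ⟨j0, hj0, hmaxeq⟩ := maxRatio_mem μ ν (exists_pos_coord hν)
      obtain ⟨i0, hi0, hmineq⟩ := minRatio_mem μ ν (exists_pos_coord hν)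
      have hμj0 : 0 < μ j0 := (hsupp j0).2 hj0
      have hμi0 : 0 < μ i0 := (hsupp i0).2 hi0
      have t1 : Tendsto (fun m => μs m j0 / νs m j0) atTop (𝓝 (μ j0 / ν j0)) :=
        (tendsto_coord hconvμ j0).div (tendsto_coord hconvν j0) hj0.ne'
      have t2 : Tendsto (fun m => μs m i0 / νs m i0) atTop (𝓝 (μ i0 / ν i0)) :=
        (tendsto_coord hconvμ i0).div (tendsto_coord hconvν i0) hi0.ne'
      have hden : μ i0 / ν i0 ≠ 0 := (div_pos hμi0 hi0).ne'
      have hg : Tendsto (fun m => Real.log ((μs m j0 / νs m j0) / (μs m i0 / νs m i0)))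
          atTop (𝓝 (Real.log ((μ j0 / ν j0) / (μ i0 / ν i0)))) :=
        ((Real.continuousAt_log (div_pos (div_pos hμj0 hj0) (div_pos hμi0 hi0)).ne').tendsto).comp
          (t1.div t2 hden)
      have hceq : c < Real.log ((μ j0 / ν j0) / (μ i0 / ν i0)) := by
        rwa [← hmaxeq, ← hmineq]
      filter_upwards [hg.eventually (eventually_gt_nhds hceq),
        (tendsto_coord hconvν j0).eventually (eventually_gt_nhds hj0),
        (tendsto_coord hconvν i0).eventually (eventually_gt_nhds hi0),
        (tendsto_coord hconvμ j0).eventually (eventually_gt_nhds hμj0),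
        (tendsto_coord hconvμ i0).eventually (eventually_gt_nhds hμi0)]
        with m hgm hνj hνi hμj hμi
      rw [hilbertDist]
      split
      case isTrue hm =>
        rw [EReal.coe_lt_coe_iff]
        have hminpos : 0 < minRatio (μs m) (νs m) := minRatio_pos hm ⟨j0, hνj⟩
        have hle : (μs m j0 / νs m j0) / (μs m i0 / νs m i0)
            ≤ maxRatio (μs m) (νs m) / minRatio (μs m) (νs m) :=
          div_le_div₀ (le_trans (div_pos hμj hνj).le (le_maxRatio hνj)) (le_maxRatio hνj)
            hminpos (minRatio_le hνi)
        calc c < Real.log ((μs m j0 / νs m j0) / (μs m i0 / νs m i0)) := hgm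
          _ ≤ _ := Real.log_le_log (by positivity) hle
      case isFalse => exact EReal.coe_lt_top c
    · -- supports of the limit differ: distances blow up
      clear hc
      push_neg at hsupp
      obtain ⟨i1, hi1⟩ := hsupp
      by_cases hB1 : ∃ i, 0 < μ i ∧ ν i = 0
      · -- some coordinate where μ is positive but ν vanishes
        obtain ⟨i1, hμi1, hνi1⟩ := hB1
        obtain ⟨j1, hνj1⟩ := exists_pos_coord hν
        set a : ℝ := μ i1 / 2 with ha_def
        set D : ℝ := ν j1 / 2 with hD_def
        have ha : 0 < a := by positivity
        have hD : 0 < D := by positivity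
        set E : ℝ := Real.exp c with hE_def
        have hE : 0 < E := Real.exp_pos c
        set ε : ℝ := a * D / (2 * E) with hε_def
        have hε : 0 < ε := by positivity
        have hνi1' : ν i1 < ε := by rw [hνi1]; exact hε
        filter_upwards [(tendsto_coord hconvμ i1).eventually (eventually_gt_nhds (by linarith : a < μ i1)),
          (tendsto_coord hconvν i1).eventually (eventually_lt_nhds hνi1'),
          (tendsto_coord hconvν j1).eventually (eventually_gt_nhds (by linarith : D < ν j1))]
          with m hμsi hνsi hνsj
        rw [hilbertDist]
        split
        case isFalse => exact EReal.coe_lt_top c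
        case isTrue hm =>
          rw [EReal.coe_lt_coe_iff]
          have hμsi' : 0 < μs m i1 := lt_trans ha hμsi
          have hνsi' : 0 < νs m i1 := (hm i1).1 hμsi'
          have hminpos : 0 < minRatio (μs m) (νs m) := minRatio_pos hm ⟨j1, lt_trans hD hνsj⟩
          have hmin : minRatio (μs m) (νs m) ≤ 1 / D :=
            le_trans (minRatio_le (lt_trans hD hνsj))
              (div_le_div₀ zero_le_one (coord_le_one (hμs m) j1) hD hνsj.le)
          have hmax : a / ε ≤ maxRatio (μs m) (νs m) :=
            le_trans (div_le_div₀ hμsi'.le hμsi.le hνsi' hνsi.le) (le_maxRatio hνsi')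
          have hX : E < (a / ε) / (1 / D) := by
            have : (a / ε) / (1 / D) = 2 * E := by
              rw [hε_def]
              field_simp
            rw [this]; linarith
          have hchain : E < maxRatio (μs m) (νs m) / minRatio (μs m) (νs m) :=
            lt_of_lt_of_le hX
              (div_le_div₀ (le_trans (by positivity) hmax) hmax hminpos hmin)
          calc c = Real.log E := (Real.log_exp c).symm
            _ < _ := Real.log_lt_log hE hchain
      · -- otherwise some coordinate where ν is positive but μ vanishes
        push_neg at hB1
        have hμν : ∀ i, 0 < μ i → 0 < ν i := fun i hi =>
          lt_of_le_of_ne (hν.2 i) (Ne.symm (hB1 i hi))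
        have hi1' : 0 < ν i1 ∧ μ i1 = 0 := by
          rcases hi1 with ⟨h1, h2⟩ | ⟨h1, h2⟩
          · exact absurd (le_antisymm h2 (hν.2 i1)) (hB1 i1 h1)
          · exact ⟨h2, le_antisymm h1 (hμ.2 i1)⟩
        obtain ⟨hνi1, hμi1⟩ := hi1'
        obtain ⟨j1, hμj1⟩ := exists_pos_coord hμ
        have hνj1 : 0 < ν j1 := hμν j1 hμj1
        set a : ℝ := μ j1 / 2 with ha_def
        set D : ℝ := ν i1 / 2 with hD_def
        have ha : 0 < a := by positivity
        have hD : 0 < D := by positivity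
        set E : ℝ := Real.exp c with hE_def
        have hE : 0 < E := Real.exp_pos c
        set ε : ℝ := a * D / (2 * E) with hε_def
        have hε : 0 < ε := by positivity
        have hμi1' : μ i1 < ε := by rw [hμi1]; exact hε
        filter_upwards [(tendsto_coord hconvμ j1).eventually (eventually_gt_nhds (by linarith : a < μ j1)),
          (tendsto_coord hconvμ i1).eventually (eventually_lt_nhds hμi1'),
          (tendsto_coord hconvν i1).eventually (eventually_gt_nhds (by linarith : D < ν i1)),
          (tendsto_coord hconvν j1).eventually (eventually_gt_nhds hνj1)]
          with m hμsj hμsi hνsi hνsj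
        rw [hilbertDist]
        split
        case isFalse => exact EReal.coe_lt_top c
        case isTrue hm =>
          rw [EReal.coe_lt_coe_iff]
          have hνsi' : 0 < νs m i1 := lt_trans hD hνsi
          have hμspos : 0 < μs m i1 := (hm i1).2 hνsi'
          have hminpos : 0 < minRatio (μs m) (νs m) := minRatio_pos hm ⟨i1, hνsi'⟩
          have hmin : minRatio (μs m) (νs m) ≤ ε / D :=
            le_trans (minRatio_le hνsi') (div_le_div₀ hε.le hμsi.le hD hνsi.le)
          have hmax : a / 1 ≤ maxRatio (μs m) (νs m) :=
            le_trans (div_le_div₀ (le_trans ha.le hμsj.le) hμsj.le hνsj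
              (coord_le_one (hνs m) j1)) (le_maxRatio hνsj)
          have hX : E < (a / 1) / (ε / D) := by
            have : (a / 1) / (ε / D) = 2 * E := by
              rw [hε_def]
              field_simp
            rw [this]; linarith
          have hchain : E < maxRatio (μs m) (νs m) / minRatio (μs m) (νs m) :=
            lt_of_lt_of_le hX
              (div_le_div₀ (le_trans (by positivity) hmax) hmax hminpos hmin)
          calc c = Real.log E := (Real.log_exp c).symm
            _ < _ := Real.log_lt_log hE hchain
  -- conclude via the characterization of liminf
  have hne : ∀ x y : EuclideanSpace ℝ (Fin (n+1)), (⊥ : EReal) < hilbertDist x y := by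
    intro x y
    rw [hilbertDist]
    split
    · exact EReal.bot_lt_coe _
    · exact bot_lt_top
  rw [le_liminf_iff]
  intro b hb
  induction b with
  | bot => filter_upwards with m using hne _ _
  | coe c => exact key c hb
  | top => exact absurd hb (not_lt.2 le_top)
end
end

section
/- Let π, π̃ be in the interior of the probability simplex, let i* maximize and k* minimize π^j/π̃^j, set M = π^{i*}/π̃^{i*}, 1/m = π^{k*}/π̃^{k*}, and let q_{ik}, q_{ki} ≥ 0. Then q_{i*k*}(π^{i*}/π^{k*} − π̃^{i*}/π̃^{k*}) + q_{k*i*}(π̃^{k*}/π̃^{i*} − π^{k*}/π^{i*}) ≥ 2√(q_{i*k*} q_{k*i*}) · (Mm − 1)/√(Mm) = 4√(q_{i*k*} q_{k*i*}) · sinh( H(π,π̃)/2 ). -/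
open Finset

noncomputable section

theorem drift_amgm_sinh_bound {n : ℕ} (π π' : EuclideanSpace ℝ (Fin (n+1)))
    (hπ : π ∈ intSimplex n) (hπ' : π' ∈ intSimplex n)
    (istar kstar : Fin (n+1))
    (hmax : ∀ j, π j / π' j ≤ π istar / π' istar)
    (hmin : ∀ j, π kstar / π' kstar ≤ π j / π' j)
    (q₁ q₂ : ℝ) (hq₁ : 0 ≤ q₁) (hq₂ : 0 ≤ q₂)
    (M m : ℝ) (hM : M = π istar / π' istar) (hm : 1 / m = π kstar / π' kstar) :
    2 * Real.sqrt (q₁ * q₂) * ((M * m - 1) / Real.sqrt (M * m))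
      ≤ q₁ * (π istar / π kstar - π' istar / π' kstar)
        + q₂ * (π' kstar / π' istar - π kstar / π istar) ∧
    2 * Real.sqrt (q₁ * q₂) * ((M * m - 1) / Real.sqrt (M * m))
      = 4 * Real.sqrt (q₁ * q₂) * Real.sinh (Real.log (M * m) / 2) := by
  obtain ⟨-, hp⟩ := hπ
  obtain ⟨-, hp'⟩ := hπ'
  have hpi : 0 < π istar := hp istar
  have hpk : 0 < π kstar := hp kstar
  have hpi' : 0 < π' istar := hp' istar
  have hpk' : 0 < π' kstar := hp' kstar
  -- m and M
  have hmpos : 0 < m := one_div_pos.mp (hm ▸ div_pos hpk hpk')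
  have hm' : m = π' kstar / π kstar := by
    rw [← one_div_one_div m, hm, one_div_div]
  -- set x = M * m
  set x : ℝ := M * m with hx
  have hxval : x = (π istar * π' kstar) / (π' istar * π kstar) := by
    rw [hx, hM, hm']
    field_simp
  have hxpos : 0 < x := by
    rw [hxval]; positivity
  have hx1 : 1 ≤ x := by
    have := hmin istar
    rw [hxval]
    rw [div_le_div_iff₀ hpk' hpi'] at this
    rw [le_div_iff₀ (by positivity)]
    nlinarith
  set a : ℝ := π' istar / π' kstar with ha
  have hapos : 0 < a := div_pos hpi' hpk'
  -- identities
  have hid1 : π istar / π kstar - π' istar / π' kstar = a * (x - 1) := by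
    rw [ha, hxval]; field_simp
  have hid2 : π' kstar / π' istar - π kstar / π istar = (x - 1) / (a * x) := by
    rw [ha, hxval]; field_simp
  set t : ℝ := Real.sqrt x with ht
  have htpos : 0 < t := Real.sqrt_pos.2 hxpos
  have ht2 : t ^ 2 = x := Real.sq_sqrt hxpos.le
  set s : ℝ := Real.sqrt (q₁ * q₂) with hs
  have hspos : 0 ≤ s := Real.sqrt_nonneg _
  have hs2 : s ^ 2 = q₁ * q₂ := Real.sq_sqrt (by positivity)
  constructor
  · -- inequality
    rw [hid1, hid2]
    -- AM-GM: 2 * s / t ≤ q₁ * a + q₂ / (a * x)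
    have key : 2 * s / t ≤ q₁ * a + q₂ / (a * x) := by
      have h1 : Real.sqrt (q₁ * a) * Real.sqrt (q₂ / (a * x)) = s / t := by
        rw [← Real.sqrt_mul (by positivity), hs, ht, ← Real.sqrt_div' _ (by positivity)]
        congr 1
        field_simp
      have h2 := two_mul_le_add_sq (Real.sqrt (q₁ * a)) (Real.sqrt (q₂ / (a * x)))
      rw [Real.sq_sqrt (by positivity), Real.sq_sqrt (by positivity)] at h2
      calc 2 * s / t = 2 * (Real.sqrt (q₁ * a) * Real.sqrt (q₂ / (a * x))) := by
            rw [h1]; ring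
        _ ≤ q₁ * a + q₂ / (a * x) := by nlinarith
    have hx1' : (0:ℝ) ≤ x - 1 := by linarith
    have := mul_le_mul_of_nonneg_right key hx1'
    calc 2 * s * ((x - 1) / t) = 2 * s / t * (x - 1) := by ring
      _ ≤ (q₁ * a + q₂ / (a * x)) * (x - 1) := this
      _ = q₁ * (a * (x - 1)) + q₂ * ((x - 1) / (a * x)) := by ring
  · -- equality
    have hexp : Real.exp (Real.log x / 2) = t := by
      rw [← Real.log_sqrt hxpos.le, Real.exp_log htpos]
    have hexp' : Real.exp (-(Real.log x / 2)) = t⁻¹ := by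
      rw [Real.exp_neg, hexp]
    rw [Real.sinh_eq, hexp, hexp', ← ht2]
    have htne : t ≠ 0 := ne_of_gt htpos
    field_simp
    ring
end
end
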